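/- Fix ℓ > 0. The function v ↦ S_ℓ(v₋) is differentiable on all of ℝ with derivative v ↦ S_ℓ'(v₋). Moreover, the function r₁ : ℝ → ℝ defined by r₁(v) = S_ℓ'(v₋) − v₋ (explicitly, r₁(v) = 0 for v ≥ −ℓ, r₁(v) = (v+ℓ)²/(2ℓ) for −2ℓ < v < −ℓ, and r₁(v) = −(3ℓ + 2v)/2 for v ≤ −2ℓ) is nonnegative and convex on ℝ. -/

import Mathlib

open Real

/-- The renormalisation entropy `S_ℓ`: `S_ℓ(v) = v²/2` for `|v| ≤ ℓ`;
`S_ℓ(v) = −|v|³/(6ℓ) + v² − (ℓ/2)|v| + ℓ²/6` for `ℓ < |v| < 2ℓ`;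
`S_ℓ(v) = (3ℓ/2)|v| − (7/6)ℓ²` for `|v| ≥ 2ℓ`. -/
noncomputable def Sl (ℓ v : ℝ) : ℝ :=
  if |v| ≤ ℓ then v ^ 2 / 2
  else if |v| < 2 * ℓ then -|v| ^ 3 / (6 * ℓ) + v ^ 2 - (ℓ / 2) * |v| + ℓ ^ 2 / 6
  else (3 * ℓ / 2) * |v| - (7 / 6) * ℓ ^ 2

/-- The derivative of `S_ℓ`: `S_ℓ'(v) = v` for `|v| ≤ ℓ`;
`S_ℓ'(v) = sgn(v)(2|v| − v²/(2ℓ) − ℓ/2)` for `ℓ < |v| < 2ℓ`;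
`S_ℓ'(v) = (3ℓ/2)sgn(v)` for `|v| ≥ 2ℓ`. -/
noncomputable def Sl' (ℓ v : ℝ) : ℝ :=
  if |v| ≤ ℓ then v
  else if |v| < 2 * ℓ then Real.sign v * (2 * |v| - v ^ 2 / (2 * ℓ) - ℓ / 2)
  else (3 * ℓ / 2) * Real.sign v

/-- Gluing two one-sided derivatives at a point. -/
private lemma glue {f f₁ f₂ : ℝ → ℝ} {a b c d : ℝ} (hab : b < a) (hac : a < c)
    (h₁ : HasDerivAt f₁ d a) (h₂ : HasDerivAt f₂ d a)
    (e₁ : ∀ x, b < x → x ≤ a → f x = f₁ x) (e₂ : ∀ x, a ≤ x → x < c → f x = f₂ x) :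
    HasDerivAt f d a := by
  have h1 : HasDerivWithinAt f d (Set.Ioc b a) a :=
    (h₁.hasDerivWithinAt).congr (fun x hx => e₁ x hx.1 hx.2) (e₁ a hab le_rfl)
  have h2 : HasDerivWithinAt f d (Set.Ico a c) a :=
    (h₂.hasDerivWithinAt).congr (fun x hx => e₂ x hx.1 hx.2) (e₂ a le_rfl hac)
  have h3 := h1.union h2
  rw [Set.Ioc_union_Ico_eq_Ioo hab hac] at h3
  exact h3.hasDerivAt (Ioo_mem_nhds hab hac)

-- value formulas for `Sl ℓ (min v 0)`
private lemma Sl_e0 {ℓ : ℝ} (hℓ : 0 < ℓ) (v : ℝ) (h : 0 ≤ v) : Sl ℓ (min v 0) = 0 := by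
  rw [min_eq_right h]
  simp [Sl, hℓ.le]

private lemma Sl_e1 {ℓ : ℝ} (hℓ : 0 < ℓ) (v : ℝ) (h1 : -ℓ ≤ v) (h2 : v ≤ 0) :
    Sl ℓ (min v 0) = v ^ 2 / 2 := by
  rw [min_eq_left h2, Sl, if_pos (abs_le.mpr ⟨h1, h2.trans hℓ.le⟩)]

private lemma Sl_e2 {ℓ : ℝ} (hℓ : 0 < ℓ) (v : ℝ) (h1 : -(2*ℓ) ≤ v) (h2 : v ≤ -ℓ) :
    Sl ℓ (min v 0) = v ^ 3 / (6*ℓ) + v ^ 2 + (ℓ/2) * v + ℓ ^ 2 / 6 := by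
  have hne : ℓ ≠ 0 := hℓ.ne'
  have hv0 : v ≤ 0 := h2.trans (by linarith)
  rw [min_eq_left hv0, Sl, abs_of_nonpos hv0]
  split_ifs with hA hB
  · have : v = -ℓ := le_antisymm h2 (by linarith)
    subst this; field_simp; ring
  · field_simp; ring
  · have : v = -(2*ℓ) := le_antisymm (by push_neg at hB; linarith) h1
    subst this; field_simp; ring

private lemma Sl_e3 {ℓ : ℝ} (hℓ : 0 < ℓ) (v : ℝ) (h : v ≤ -(2*ℓ)) :
    Sl ℓ (min v 0) = -(3*ℓ/2) * v - (7/6) * ℓ ^ 2 := by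
  have hv0 : v ≤ 0 := h.trans (by linarith)
  rw [min_eq_left hv0, Sl, abs_of_nonpos hv0]
  rw [if_neg (by simp only [not_le]; linarith), if_neg (by simp only [not_lt]; linarith)]
  ring

-- value formulas for `Sl' ℓ (min v 0)`
private lemma Sl'_e0 {ℓ : ℝ} (hℓ : 0 < ℓ) (v : ℝ) (h : 0 ≤ v) : Sl' ℓ (min v 0) = 0 := by
  rw [min_eq_right h]
  simp [Sl', hℓ.le]

private lemma Sl'_e1 {ℓ : ℝ} (hℓ : 0 < ℓ) (v : ℝ) (h1 : -ℓ ≤ v) (h2 : v ≤ 0) :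
    Sl' ℓ (min v 0) = v := by
  rw [min_eq_left h2, Sl', if_pos (abs_le.mpr ⟨h1, h2.trans hℓ.le⟩)]

private lemma Sl'_e2 {ℓ : ℝ} (hℓ : 0 < ℓ) (v : ℝ) (h1 : -(2*ℓ) ≤ v) (h2 : v ≤ -ℓ) :
    Sl' ℓ (min v 0) = v ^ 2 / (2*ℓ) + 2*v + ℓ/2 := by
  have hne : ℓ ≠ 0 := hℓ.ne'
  have hvneg : v < 0 := lt_of_le_of_lt h2 (by linarith)
  rw [min_eq_left hvneg.le, Sl', abs_of_neg hvneg, Real.sign_of_neg hvneg]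
  split_ifs with hA hB
  · have : v = -ℓ := le_antisymm h2 (by linarith)
    subst this; field_simp; ring
  · field_simp; ring
  · have : v = -(2*ℓ) := le_antisymm (by push_neg at hB; linarith) h1
    subst this; field_simp; ring

private lemma Sl'_e3 {ℓ : ℝ} (hℓ : 0 < ℓ) (v : ℝ) (h : v ≤ -(2*ℓ)) :
    Sl' ℓ (min v 0) = -(3*ℓ)/2 := by
  have hvneg : v < 0 := by linarith
  rw [min_eq_left hvneg.le, Sl', abs_of_neg hvneg, Real.sign_of_neg hvneg]
  rw [if_neg (by simp only [not_le]; linarith), if_neg (by simp only [not_lt]; linarith)]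
  ring

-- derivatives of the smooth pieces of `Sl ℓ (min · 0)`
private lemma hP3 (ℓ : ℝ) (x : ℝ) :
    HasDerivAt (fun y : ℝ => -(3*ℓ/2) * y - (7/6) * ℓ ^ 2) (-(3*ℓ)/2) x := by
  have h := ((hasDerivAt_id x).const_mul (-(3*ℓ/2))).sub_const ((7/6) * ℓ ^ 2)
  refine h.congr_deriv ?_
  ring

private lemma hP2 {ℓ : ℝ} (hℓ : 0 < ℓ) (x : ℝ) :
    HasDerivAt (fun y : ℝ => y ^ 3 / (6*ℓ) + y ^ 2 + (ℓ/2) * y + ℓ ^ 2 / 6)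
      (x ^ 2 / (2*ℓ) + 2*x + ℓ/2) x := by
  have hne : ℓ ≠ 0 := hℓ.ne'
  have h := ((((hasDerivAt_pow 3 x).div_const (6*ℓ)).add (hasDerivAt_pow 2 x)).add
      ((hasDerivAt_id x).const_mul (ℓ/2))).add_const (ℓ ^ 2 / 6)
  refine h.congr_deriv ?_
  push_cast
  field_simp
  ring

private lemma hP1 (x : ℝ) : HasDerivAt (fun y : ℝ => y ^ 2 / 2) x x := by
  have h := (hasDerivAt_pow 2 x).div_const 2
  refine h.congr_deriv ?_
  push_cast; ring

-- derivatives of the smooth pieces of `r₁`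
private lemma hQ3 (ℓ : ℝ) (x : ℝ) :
    HasDerivAt (fun y : ℝ => -(3*ℓ + 2*y)/2) (-1) x := by
  have h := ((((hasDerivAt_id x).const_mul (2:ℝ)).const_add (3*ℓ)).neg).div_const 2
  refine h.congr_deriv ?_
  norm_num

private lemma hQ2 {ℓ : ℝ} (hℓ : 0 < ℓ) (x : ℝ) :
    HasDerivAt (fun y : ℝ => (y + ℓ) ^ 2 / (2*ℓ)) ((x + ℓ)/ℓ) x := by
  have hne : ℓ ≠ 0 := hℓ.ne'
  have h := (((hasDerivAt_id x).add_const ℓ).pow 2).div_const (2*ℓ)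
  refine h.congr_deriv ?_
  push_cast [id]
  field_simp

/-- For `ℓ > 0`: `v ↦ S_ℓ(v₋)` is differentiable with derivative `v ↦ S_ℓ'(v₋)`, and
`r₁(v) = S_ℓ'(v₋) − v₋` (explicitly `0` for `v ≥ −ℓ`, `(v+ℓ)²/(2ℓ)` for `−2ℓ < v < −ℓ`,
`−(3ℓ+2v)/2` for `v ≤ −2ℓ`) is nonnegative and convex. -/
theorem Sl_neg_part_derivative_and_r1 (ℓ : ℝ) (hℓ : 0 < ℓ) :
    (∀ v : ℝ, HasDerivAt (fun w => Sl ℓ (min w 0)) (Sl' ℓ (min v 0)) v) ∧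
    (∀ v : ℝ, -ℓ ≤ v → Sl' ℓ (min v 0) - min v 0 = 0) ∧
    (∀ v : ℝ, -(2 * ℓ) < v → v < -ℓ →
      Sl' ℓ (min v 0) - min v 0 = (v + ℓ) ^ 2 / (2 * ℓ)) ∧
    (∀ v : ℝ, v ≤ -(2 * ℓ) →
      Sl' ℓ (min v 0) - min v 0 = -(3 * ℓ + 2 * v) / 2) ∧
    (∀ v : ℝ, 0 ≤ Sl' ℓ (min v 0) - min v 0) ∧
    ConvexOn ℝ Set.univ (fun v => Sl' ℓ (min v 0) - min v 0) := by
  have hne : ℓ ≠ 0 := hℓ.ne'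
  -- r₁ value formulas
  have r0 : ∀ v : ℝ, -ℓ ≤ v → Sl' ℓ (min v 0) - min v 0 = 0 := by
    intro v hv
    rcases le_or_gt v 0 with h | h
    · rw [Sl'_e1 hℓ v hv h, min_eq_left h]; ring
    · rw [Sl'_e0 hℓ v h.le, min_eq_right h.le]; ring
  have r2 : ∀ v : ℝ, -(2*ℓ) ≤ v → v ≤ -ℓ →
      Sl' ℓ (min v 0) - min v 0 = (v + ℓ) ^ 2 / (2*ℓ) := by
    intro v h1 h2
    rw [Sl'_e2 hℓ v h1 h2, min_eq_left (by linarith)]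
    field_simp; ring
  have r3 : ∀ v : ℝ, v ≤ -(2*ℓ) →
      Sl' ℓ (min v 0) - min v 0 = -(3*ℓ + 2*v)/2 := by
    intro v h
    rw [Sl'_e3 hℓ v h, min_eq_left (by linarith)]
    ring
  refine ⟨?_, r0, fun v h1 h2 => r2 v h1.le h2.le, r3, ?_, ?_⟩
  · -- differentiability of Sl (min · 0)
    intro v
    rcases lt_trichotomy v (-(2*ℓ)) with h | h | h
    · rw [Sl'_e3 hℓ v h.le]
      exact glue (b := v - 1) (by linarith) h (hP3 ℓ v) (hP3 ℓ v)
        (fun x hx hx' => Sl_e3 hℓ x (by linarith))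
        (fun x hx hx' => Sl_e3 hℓ x (by linarith))
    · subst h
      rw [Sl'_e3 hℓ _ le_rfl]
      have h₂ : HasDerivAt (fun y : ℝ => y ^ 3 / (6*ℓ) + y ^ 2 + (ℓ/2) * y + ℓ ^ 2 / 6)
          (-(3*ℓ)/2) (-(2*ℓ)) := by
        convert hP2 hℓ (-(2*ℓ)) using 1
        field_simp; ring
      exact glue (b := -(2*ℓ) - 1) (by linarith) (by linarith : -(2*ℓ) < -ℓ)
        (hP3 ℓ _) h₂
        (fun x hx hx' => Sl_e3 hℓ x hx')
        (fun x hx hx' => Sl_e2 hℓ x hx hx'.le)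
    · rcases lt_trichotomy v (-ℓ) with h' | h' | h'
      · rw [Sl'_e2 hℓ v h.le h'.le]
        exact glue h h' (hP2 hℓ v) (hP2 hℓ v)
          (fun x hx hx' => Sl_e2 hℓ x hx.le (by linarith))
          (fun x hx hx' => Sl_e2 hℓ x (by linarith) hx'.le)
      · subst h'
        rw [Sl'_e1 hℓ _ le_rfl (by linarith)]
        have h₁ : HasDerivAt (fun y : ℝ => y ^ 3 / (6*ℓ) + y ^ 2 + (ℓ/2) * y + ℓ ^ 2 / 6)
            (-ℓ) (-ℓ) := by
          convert hP2 hℓ (-ℓ) using 1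
          field_simp; ring
        exact glue (by linarith : -(2*ℓ) < -ℓ) (by linarith : -ℓ < 0) h₁ (hP1 (-ℓ))
          (fun x hx hx' => Sl_e2 hℓ x hx.le hx')
          (fun x hx hx' => Sl_e1 hℓ x hx hx'.le)
      · rcases lt_trichotomy v 0 with h'' | h'' | h''
        · rw [Sl'_e1 hℓ v h'.le h''.le]
          exact glue h' h'' (hP1 v) (hP1 v)
            (fun x hx hx' => Sl_e1 hℓ x hx.le (by linarith))
            (fun x hx hx' => Sl_e1 hℓ x (by linarith) hx'.le)
        · subst h''
          rw [Sl'_e0 hℓ 0 le_rfl]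
          have h₁ : HasDerivAt (fun y : ℝ => y ^ 2 / 2) (0:ℝ) 0 := hP1 0
          exact glue (by linarith : -ℓ < 0) (by linarith : (0:ℝ) < 1) h₁
            (hasDerivAt_const 0 (0:ℝ))
            (fun x hx hx' => Sl_e1 hℓ x hx.le hx')
            (fun x hx hx' => Sl_e0 hℓ x hx)
        · rw [Sl'_e0 hℓ v h''.le]
          exact glue h'' (by linarith : v < v + 1) (hasDerivAt_const v (0:ℝ))
            (hasDerivAt_const v (0:ℝ))
            (fun x hx hx' => Sl_e0 hℓ x hx.le)
            (fun x hx hx' => Sl_e0 hℓ x (by linarith))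
  · -- nonnegativity of r₁
    intro v
    rcases le_or_gt v (-(2*ℓ)) with h | h
    · rw [r3 v h]; nlinarith
    · rcases le_or_gt v (-ℓ) with h' | h'
      · rw [r2 v h.le h']; positivity
      · rw [r0 v h'.le]
  · -- convexity of r₁
    set D : ℝ → ℝ := fun v => if v ≤ -(2*ℓ) then (-1:ℝ) else if v ≤ -ℓ then (v + ℓ)/ℓ else 0
      with hD
    have hfd : ∀ v : ℝ, HasDerivAt (fun w => Sl' ℓ (min w 0) - min w 0) (D v) v := by
      intro v
      rcases lt_trichotomy v (-(2*ℓ)) with h | h | h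
      · rw [show D v = -1 from if_pos h.le]
        exact glue (b := v - 1) (by linarith) h (hQ3 ℓ v) (hQ3 ℓ v)
          (fun x hx hx' => r3 x (by linarith))
          (fun x hx hx' => r3 x (by linarith))
      · subst h
        rw [show D (-(2*ℓ)) = -1 from if_pos le_rfl]
        have h₂ : HasDerivAt (fun y : ℝ => (y + ℓ) ^ 2 / (2*ℓ)) (-1) (-(2*ℓ)) := by
          convert hQ2 hℓ (-(2*ℓ)) using 1
          field_simp
          ring
        exact glue (b := -(2*ℓ) - 1) (by linarith) (by linarith : -(2*ℓ) < -ℓ)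
          (hQ3 ℓ _) h₂
          (fun x hx hx' => r3 x hx')
          (fun x hx hx' => r2 x hx hx'.le)
      · rcases lt_trichotomy v (-ℓ) with h' | h' | h'
        · rw [show D v = (v + ℓ)/ℓ from by rw [hD]; simp only [not_le.2 h, if_false, if_pos h'.le]]
          exact glue h h' (hQ2 hℓ v) (hQ2 hℓ v)
            (fun x hx hx' => r2 x hx.le (by linarith))
            (fun x hx hx' => r2 x (by linarith) hx'.le)
        · subst h'
          have hDv : D (-ℓ) = 0 := by
            rw [hD]
            simp only [if_neg (by intro hc; linarith : ¬ -ℓ ≤ -(2*ℓ)), if_pos le_rfl]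
            simp
          rw [hDv]
          have h₁ : HasDerivAt (fun y : ℝ => (y + ℓ) ^ 2 / (2*ℓ)) (0:ℝ) (-ℓ) := by
            convert hQ2 hℓ (-ℓ) using 1
            simp
          exact glue (by linarith : -(2*ℓ) < -ℓ) (by linarith : -ℓ < -ℓ + 1) h₁
            (hasDerivAt_const (-ℓ) (0:ℝ))
            (fun x hx hx' => r2 x hx.le hx')
            (fun x hx hx' => r0 x hx)
        · rw [show D v = 0 from by
            rw [hD]; simp only [if_neg (by linarith : ¬ v ≤ -(2*ℓ)),
              if_neg (by linarith : ¬ v ≤ -ℓ)]]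
          exact glue h' (by linarith : v < v + 1) (hasDerivAt_const v (0:ℝ))
            (hasDerivAt_const v (0:ℝ))
            (fun x hx hx' => r0 x (by linarith))
            (fun x hx hx' => r0 x (by linarith))
    have hdiff : Differentiable ℝ (fun w => Sl' ℓ (min w 0) - min w 0) :=
      fun v => (hfd v).differentiableAt
    have hderiv : deriv (fun w => Sl' ℓ (min w 0) - min w 0) = D :=
      funext fun v => (hfd v).deriv
    have hmono : Monotone D := by
      intro a b hab
      rw [hD]
      simp only
      by_cases ha2 : a ≤ -(2*ℓ)
      · rw [if_pos ha2]
        by_cases hb2 : b ≤ -(2*ℓ)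
        · rw [if_pos hb2]
        · rw [if_neg hb2]
          push_neg at hb2
          by_cases hb1 : b ≤ -ℓ
          · rw [if_pos hb1, le_div_iff₀ hℓ]; linarith
          · rw [if_neg hb1]; linarith
      · push_neg at ha2
        rw [if_neg (not_le.2 ha2), if_neg (by push_neg; linarith : ¬ b ≤ -(2*ℓ))]
        by_cases ha1 : a ≤ -ℓ
        · rw [if_pos ha1]
          by_cases hb1 : b ≤ -ℓ
          · rw [if_pos hb1]
            apply div_le_div_of_nonneg_right ?_ hℓ.le
            linarith
          · rw [if_neg hb1, div_le_iff₀ hℓ]; linarith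
        · rw [if_neg ha1, if_neg (by push_neg at ha1 ⊢; linarith : ¬ b ≤ -ℓ)]
    exact Monotone.convexOn_univ_of_deriv hdiff (hderiv ▸ hmono)
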